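/- If the preference relations of all players in a finite sequential game are acyclic, then the Subgame-Improvement dynamics terminates: there is no infinite sequence s⁰ ⇀_{SI} s¹ ⇀_{SI} s² ⇀_{SI} ... of strategy profiles. -/

import Mathlib

namespace SeqGame

inductive GameTree (N O : Type) : Type where
  | leaf (o : O) : GameTree N O
  | node (i : N) (children : List (GameTree N O)) : GameTree N O

namespace GameTree

variable {N O : Type}

/-- The subtree of `T` at position `p` (a list of child indices), if it exists. -/
def subtree : GameTree N O → List ℕ → Option (GameTree N O)
  | t, [] => some t
  | leaf _, _ :: _ => none
  | node _ c, k :: p =>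
    match getElem? c k with
    | some t => subtree t p
    | none => none

/-- A strategy profile: a choice of a child index at every position. -/
abbrev Profile := List ℕ → ℕ

/-- A profile is legal if it chooses an existing child at every internal node. -/
def Legal (T : GameTree N O) (s : Profile) : Prop :=
  ∀ p i c, T.subtree p = some (node i c) → s p < c.length

/-- The profiles `s` and `s'` differ at the (valid, internal) node `p`. -/
def Differs (T : GameTree N O) (s s' : Profile) (p : List ℕ) : Prop :=
  (∃ i c, T.subtree p = some (node i c)) ∧ s p ≠ s' p

/-- The outcome reached when playing according to the profile `s`. -/
def outcome : GameTree N O → Profile → Option O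
  | leaf o, _ => some o
  | node _ c, s =>
    match h : getElem? c (s []) with
    | some t => outcome t (fun p => s (s [] :: p))
    | none => none
decreasing_by
  have hm : t ∈ c := by
    exact List.mem_of_getElem? h
  have := List.sizeOf_lt_of_mem hm
  simp only [node.sizeOf_spec]
  omega

/-- The profile `s` re-rooted at position `p`. -/
def shift (s : Profile) (p : List ℕ) : Profile := fun q => s (p ++ q)

/-- The owner of the node at position `p`, if it is internal. -/
def ownerAt (T : GameTree N O) (p : List ℕ) : Option N :=
  match T.subtree p with
  | some (node i _) => some i
  | _ => none

/-- `p` lies along the play induced by `s`. -/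
def OnPlay (s : Profile) (p : List ℕ) : Prop :=
  ∀ q k, (q ++ [k]) <+: p → s q = k

/-- Improvement property: every player who changes strictly improves the outcome. -/
def Iprop (T : GameTree N O) (pref : N → O → O → Prop) (s s' : Profile) : Prop :=
  ∀ p i c, T.subtree p = some (node i c) → s p ≠ s' p →
    ∃ x y, T.outcome s = some x ∧ T.outcome s' = some y ∧ pref i x y

/-- Subgame improvement property. -/
def SIprop (T : GameTree N O) (pref : N → O → O → Prop) (s s' : Profile) : Prop :=
  ∀ p i c, T.subtree p = some (node i c) → s p ≠ s' p →
    ∃ x y, outcome (node i c) (shift s p) = some x ∧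
      outcome (node i c) (shift s' p) = some y ∧ pref i x y

/-- Laziness property: all changed nodes lie along the play induced by `s'`. -/
def Lprop (T : GameTree N O) (s s' : Profile) : Prop :=
  ∀ p, Differs T s s' p → OnPlay s' p

/-- One player property: at most one player changes his strategy. -/
def P1prop (T : GameTree N O) (s s' : Profile) : Prop :=
  ∃ i : N, ∀ p, Differs T s s' p → T.ownerAt p = some i

/-- Atomicity property: at most one node changes. -/
def Aprop (T : GameTree N O) (s s' : Profile) : Prop :=
  ∀ p q, Differs T s s' p → Differs T s s' q → p = q

/-- Names of the update properties. -/
inductive Upd : Type | I | SI | L | P1 | A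
deriving DecidableEq

/-- Interpretation of an update property name. -/
def holds (T : GameTree N O) (pref : N → O → O → Prop) : Upd → Profile → Profile → Prop
  | .I => Iprop T pref
  | .SI => SIprop T pref
  | .L => Lprop T
  | .P1 => P1prop T
  | .A => Aprop T

/-- The X-dynamics: an actual update (between legal profiles) satisfying
all properties in `X`. -/
def XDyn (X : Set Upd) (T : GameTree N O) (pref : N → O → O → Prop)
    (s s' : Profile) : Prop :=
  Legal T s ∧ Legal T s' ∧ (∃ p, Differs T s s' p) ∧ ∀ u ∈ X, holds T pref u s s'

/-- A dynamics terminates iff there is no infinite update sequence. -/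
def Terminates (D : Profile → Profile → Prop) : Prop :=
  ¬ ∃ f : ℕ → Profile, ∀ n, D (f n) (f (n + 1))

/-- `s'` is a deviation from `s` by the coalition `I`. -/
def Deviation (T : GameTree N O) (I : Set N) (s s' : Profile) : Prop :=
  Legal T s' ∧ ∀ p i c, T.subtree p = some (node i c) → i ∉ I → s p = s' p

/-- Nash equilibrium. -/
def IsNE (T : GameTree N O) (pref : N → O → O → Prop) (s : Profile) : Prop :=
  ∀ i s', Deviation T {i} s s' →
    ∀ x y, T.outcome s = some x → T.outcome s' = some y → ¬ pref i x y

/-- Subgame perfect equilibrium: an NE in every subgame. -/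
def IsSPE (T : GameTree N O) (pref : N → O → O → Prop) (s : Profile) : Prop :=
  ∀ p t, T.subtree p = some t → IsNE t pref (shift s p)

/-- Strong Nash equilibrium (Aumann). -/
def IsSNE (T : GameTree N O) (pref : N → O → O → Prop) (s : Profile) : Prop :=
  ∀ I : Set N, I.Nonempty → ∀ s', Deviation T I s s' →
    ∃ i ∈ I, ∀ x y, T.outcome s = some x → T.outcome s' = some y → ¬ pref i x y

/-- A relation is acyclic if it has no cycle. -/
def Acyclic (r : O → O → Prop) : Prop := ∀ x, ¬ Relation.TransGen r x x

/-- Incomparability. -/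
def Incomp (r : O → O → Prop) (x y : O) : Prop := ¬ r x y ∧ ¬ r y x

/-- Strict weak order: irreflexive, transitive, with transitive incomparability. -/
def IsSWO (r : O → O → Prop) : Prop :=
  (∀ x, ¬ r x x) ∧ (∀ x y z, r x y → r y z → r x z) ∧
    (∀ x y z, Incomp r x y → Incomp r y z → Incomp r x z)

/-- Strict linear order: irreflexive, transitive and total. -/
def IsSLO (r : O → O → Prop) : Prop :=
  (∀ x, ¬ r x x) ∧ (∀ x y z, r x y → r y z → r x z) ∧
    (∀ x y, x ≠ y → r x y ∨ r y x)

/-- Absence of the main pattern. -/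
def OutOfMainPattern (pref : N → O → O → Prop) : Prop :=
  ∀ (i j : N) (x y z : O),
    ¬ (pref i x y ∧ pref i y z ∧ pref j y z ∧ pref j z x)

/-- Absence of the secondary pattern. -/
def OutOfSecondaryPattern (pref : N → O → O → Prop) : Prop :=
  ∀ (i j : N) (w x y z : O),
    ¬ (pref i w x ∧ pref i x y ∧ pref i y z ∧
       Incomp (pref j) x z ∧ pref j z w ∧ Incomp (pref j) w y)

/-- Absence of both patterns. -/
def OutOfPattern (pref : N → O → O → Prop) : Prop :=
  OutOfMainPattern pref ∧ OutOfSecondaryPattern pref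

/-- The preferences can be layered: there is an ordered partition of the
outcomes (given by a layer-index function) such that higher layers are
unanimously weakly preferred, and within a layer no two players agree on
one pair while disagreeing on another pair. -/
def CanBeLayered (pref : N → O → O → Prop) : Prop :=
  ∃ ℓ : O → ℕ,
    (∀ x y, ℓ x < ℓ y → ∀ i, ¬ pref i y x) ∧
    (∀ (i j : N) (w x y z : O), ℓ w = ℓ x → ℓ x = ℓ y → ℓ y = ℓ z →
      ¬ (pref i x y ∧ pref j x y ∧ pref i w z ∧ pref j z w))

end GameTree
end SeqGame

namespace SeqGame
namespace GameTree

variable {N O : Type}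

theorem subtree_cons' (i : N) (c : List (GameTree N O)) (k : ℕ) (p : List ℕ) :
    (node i c).subtree (k :: p) = (getElem? c k).bind (fun t => t.subtree p) := by
  show (match getElem? c k with | some t => t.subtree p | none => none) = _
  cases getElem? c k <;> rfl

theorem outcome_node' (i : N) (c : List (GameTree N O)) (s : Profile) :
    outcome (node i c) s =
      (getElem? c (s [])).bind (fun t => outcome t (fun p => s (s [] :: p))) := by
  rw [outcome]
  split <;> rename_i h <;> rw [h] <;> rfl

theorem outcome_congr' : ∀ (t : GameTree N O) (s s' : Profile),
    (∀ p j d, t.subtree p = some (node j d) → s p = s' p) →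
    t.outcome s = t.outcome s'
  | leaf o, s, s', _ => by simp [outcome]
  | node i c, s, s', h => by
    have hr : s [] = s' [] := h [] i c rfl
    rw [outcome_node', outcome_node', ← hr]
    cases hc : getElem? c (s []) with
    | none => rfl
    | some t =>
      simp only [Option.bind_some]
      exact outcome_congr' t _ _ (fun p j d hp => by
        exact h (s [] :: p) j d (by rw [subtree_cons', hc, Option.bind_some]; exact hp))
termination_by t => sizeOf t
decreasing_by
  have hm : t ∈ c := List.mem_of_getElem? hc
  have := List.sizeOf_lt_of_mem hm
  simp only [node.sizeOf_spec]
  omega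

/-- Key lemma: along any sequence of (not necessarily proper) SI-steps,
only finitely many steps actually change something. -/
theorem finActive (pref : N → O → O → Prop) (hac : ∀ i, Acyclic (pref i)) :
    ∀ (T : GameTree N O) (f : ℕ → Profile),
    (∀ n, Legal T (f n) ∧ Legal T (f (n+1)) ∧ SIprop T pref (f n) (f (n+1))) →
    {n | ∃ p, Differs T (f n) (f (n+1)) p}.Finite
  | leaf o, f, _ => by
    convert Set.finite_empty using 1
    ext n
    simp only [Set.mem_setOf_eq, Set.mem_empty_iff_false, iff_false]
    rintro ⟨p, ⟨j, d, hp⟩, -⟩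
    cases p with
    | nil => simp [subtree] at hp
    | cons k q => simp [subtree] at hp
  | node i c, f, hf => by
    -- finiteness of activity inside each child
    have child : ∀ k t, getElem? c k = some t →
        {n | ∃ q, Differs (node i c) (f n) (f (n+1)) (k :: q)}.Finite := by
      intro k t hk
      have hstep : ∀ n, Legal t (fun q => f n (k :: q)) ∧
          Legal t (fun q => f (n+1) (k :: q)) ∧
          SIprop t pref (fun q => f n (k :: q)) (fun q => f (n+1) (k :: q)) := by
        intro n
        refine ⟨?_, ?_, ?_⟩
        · intro q j d hq
          exact (hf n).1 (k :: q) j d (by rw [subtree_cons', hk, Option.bind_some]; exact hq)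
        · intro q j d hq
          exact (hf n).2.1 (k :: q) j d (by rw [subtree_cons', hk, Option.bind_some]; exact hq)
        · intro q j d hq hne
          obtain ⟨x, y, hx, hy, hxy⟩ :=
            (hf n).2.2 (k :: q) j d (by rw [subtree_cons', hk, Option.bind_some]; exact hq) hne
          exact ⟨x, y, hx, hy, hxy⟩
      have hfin := finActive pref hac t (fun n => fun q => f n (k :: q)) hstep
      refine hfin.subset ?_
      rintro n ⟨q, ⟨j, d, hq⟩, hne⟩
      rw [subtree_cons', hk, Option.bind_some] at hq
      exact ⟨q, ⟨j, d, hq⟩, hne⟩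
    -- finiteness of activity in all children together
    have hU : {n | ∃ k q, Differs (node i c) (f n) (f (n+1)) (k :: q)}.Finite := by
      have hsub : {n | ∃ k q, Differs (node i c) (f n) (f (n+1)) (k :: q)} ⊆
          ⋃ k ∈ Finset.range c.length,
            {n | ∃ q, Differs (node i c) (f n) (f (n+1)) (k :: q)} := by
        rintro n ⟨k, q, hd⟩
        obtain ⟨j, d, hq⟩ := hd.1
        rw [subtree_cons'] at hq
        cases hk : getElem? c k with
        | none => rw [hk] at hq; simp at hq
        | some t =>
          have hklen : k < c.length := by
            by_contra hge
            rw [List.getElem?_eq_none (le_of_not_gt hge)] at hk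
            exact absurd hk (by simp)
          exact Set.mem_biUnion (Finset.mem_range.mpr hklen) ⟨q, hd⟩
      refine (Set.Finite.biUnion (Finset.range c.length).finite_toSet ?_).subset hsub
      intro k hk
      simp only [Finset.mem_coe, Finset.mem_range] at hk
      exact child k _ (List.getElem?_eq_getElem hk)
    -- finiteness of root changes
    have hR : {n | f n [] ≠ f (n+1) []}.Finite := by
      by_contra hinf
      replace hinf : {n | f n [] ≠ f (n+1) []}.Infinite := hinf
      obtain ⟨M, hM⟩ := hU.bddAbove
      -- after time M+1, children never change
      have frozen : ∀ n, M + 1 ≤ n → ∀ k q j d,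
          (node i c).subtree (k :: q) = some (node j d) →
          f n (k :: q) = f (M + 1) (k :: q) := by
        intro n hn
        induction n, hn using Nat.le_induction with
        | base => intro k q j d _; rfl
        | succ n hn ih =>
          intro k q j d h
          have hnU : n ∉ {m | ∃ k q, Differs (node i c) (f m) (f (m+1)) (k :: q)} := by
            intro hmem
            have := hM hmem
            omega
          have heq : f n (k :: q) = f (n+1) (k :: q) := by
            by_contra hne
            exact hnU ⟨k, q, ⟨j, d, h⟩, hne⟩
          rw [← heq]
          exact ih k q j d h
      -- after time M+1 the outcome is a fixed function of the root choice
      set w : ℕ → Option O :=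
        fun k => (getElem? c k).bind (fun t => outcome t (fun r => f (M+1) (k :: r))) with hw
      have hout : ∀ n, M + 1 ≤ n → outcome (node i c) (f n) = w (f n []) := by
        intro n hn
        rw [outcome_node']
        show _ = (getElem? c (f n [])).bind (fun t => outcome t (fun r => f (M+1) (f n [] :: r)))
        cases hk : getElem? c (f n []) with
        | none => rfl
        | some t =>
          simp only [Option.bind_some]
          exact outcome_congr' t _ _ (fun q j d hq =>
            frozen n hn (f n []) q j d (by rw [subtree_cons', hk, Option.bind_some]; exact hq))
      -- one step of the chain
      have hstep : ∀ n, M + 1 ≤ n → w (f n []) = w (f (n+1) []) ∨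
          ∃ x y, w (f n []) = some x ∧ w (f (n+1) []) = some y ∧ pref i x y := by
        intro n hn
        by_cases hne : f n [] = f (n+1) []
        · exact Or.inl (by rw [hne])
        · obtain ⟨x, y, hx, hy, hxy⟩ := (hf n).2.2 [] i c rfl hne
          refine Or.inr ⟨x, y, ?_, ?_, hxy⟩
          · rw [← hout n hn]; exact hx
          · rw [← hout (n+1) (by omega)]; exact hy
      -- chains
      have chain : ∀ a b, M + 1 ≤ a → a ≤ b → w (f a []) = w (f b []) ∨
          ∃ x y, w (f a []) = some x ∧ w (f b []) = some y ∧
            Relation.TransGen (pref i) x y := by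
        intro a b ha hab
        induction b, hab using Nat.le_induction with
        | base => exact Or.inl rfl
        | succ b hb ih =>
          rcases ih with heq | ⟨x, y, hx, hy, ht⟩
          · rcases hstep b (le_trans ha hb) with heq' | ⟨x, y, hx, hy, hxy⟩
            · exact Or.inl (heq.trans heq')
            · exact Or.inr ⟨x, y, heq.trans hx, hy, Relation.TransGen.single hxy⟩
          · rcases hstep b (le_trans ha hb) with heq' | ⟨x', y', hx', hy', hxy⟩
            · exact Or.inr ⟨x, y, hx, heq' ▸ hy, ht⟩
            · have : x' = y := by
                rw [hy] at hx'
                exact (Option.some_inj.mp hx').symm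
              subst this
              exact Or.inr ⟨x, y', hx, hy', Relation.TransGen.tail ht hxy⟩
      -- pigeonhole on an infinite set of root-change times
      have hRC : ({n | f n [] ≠ f (n+1) []} \ Set.Iio (M+1)).Infinite :=
        hinf.diff (Set.finite_Iio (M+1))
      have hmaps : Set.MapsTo (fun n => w (f n []))
          ({n | f n [] ≠ f (n+1) []} \ Set.Iio (M+1)) (w '' Set.Iio c.length) := by
        intro n _
        exact ⟨f n [], (hf n).1 [] i c rfl, rfl⟩
      obtain ⟨a, ha, b, hb, hab, huab⟩ :=
        hRC.exists_ne_map_eq_of_mapsTo hmaps ((Set.finite_Iio c.length).image w)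
      -- wlog a < b
      wlog hlt : a < b generalizing a b
      · exact this b hb a ha hab.symm huab.symm (by omega)
      have haM : M + 1 ≤ a := le_of_not_gt ha.2
      have harc : f a [] ≠ f (a+1) [] := ha.1
      have huab' : w (f a []) = w (f b []) := huab
      obtain ⟨x, y, hx', hy', hxy⟩ := (hf a).2.2 [] i c rfl harc
      have hxa : w (f a []) = some x := (hout a haM).symm.trans hx'
      have hya : w (f (a+1) []) = some y := (hout (a+1) (by omega)).symm.trans hy'
      rcases chain (a+1) b (by omega) hlt with heq' | ⟨x', y', hx'', hy'', ht⟩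
      · have h1 : y = x :=
          Option.some_inj.mp (hya.symm.trans (heq'.trans (huab'.symm.trans hxa)))
        exact hac i x (Relation.TransGen.single (h1 ▸ hxy))
      · have h2 : x' = y := Option.some_inj.mp (hx''.symm.trans hya)
        have h3 : y' = x :=
          Option.some_inj.mp (hy''.symm.trans (huab'.symm.trans hxa))
        rw [h2, h3] at ht
        exact hac i x (Relation.TransGen.head hxy ht)
    -- combine
    refine (hR.union hU).subset ?_
    rintro n ⟨p, hd⟩
    cases p with
    | nil => exact Or.inl hd.2
    | cons k q => exact Or.inr ⟨k, q, hd⟩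
termination_by T _ _ => sizeOf T
decreasing_by
  have hm : t ∈ c := List.mem_of_getElem? hk
  have := List.sizeOf_lt_of_mem hm
  simp only [node.sizeOf_spec]
  omega

end GameTree
end SeqGame

open SeqGame GameTree in
/-- If all the preferences are acyclic, the SI-dynamics terminates. -/
theorem stmt_2 {N O : Type} (T : GameTree N O) (pref : N → O → O → Prop)
    (hac : ∀ i, Acyclic (pref i)) :
    Terminates (XDyn {Upd.SI} T pref) := by
  rintro ⟨f, hf⟩
  have hstep : ∀ n, Legal T (f n) ∧ Legal T (f (n+1)) ∧
      SIprop T pref (f n) (f (n+1)) :=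
    fun n => ⟨(hf n).1, (hf n).2.1, (hf n).2.2.2 Upd.SI rfl⟩
  have hfin := finActive pref hac T f hstep
  have huniv : (Set.univ : Set ℕ) ⊆ {n | ∃ p, Differs T (f n) (f (n+1)) p} :=
    fun n _ => (hf n).2.2.1
  exact Set.infinite_univ (hfin.subset huniv)
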